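/- arXiv:1712.02690 — 7 statements merged into one kernel-verified Lean document; each statement's English description precedes it below -/
import Mathlib

section
/- For every erasure probability ε ∈ [0,1] and every integer k ≥ 1, the maximum of R_ε(δ₀,…,δ_{k−1}) over the cube [0,1/2]^k equals its maximum over the cube [0,1]^k; that is, max over {0 ≤ δ₀,…,δ_{k−1} ≤ 1/2} of R_ε(δ₀,…,δ_{k−1}) = max over {0 ≤ δ₀,…,δ_{k−1} ≤ 1} of R_ε(δ₀,…,δ_{k−1}). -/
/-- The binary entropy function (base 2), with `H2 0 = H2 1 = 0`. -/
noncomputable def H2 (x : ℝ) : ℝ := -(x * Real.logb 2 x) - (1 - x) * Real.logb 2 (1 - x)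

/-- The function `R_ε(δ₀,…,δ_{k−1})`:
`(ε̄·H₂(δ₀) + Σ_{i=1}^{k−1} ε̄^{i+1}·H₂(δ_i)·Π_{m=0}^{i−1} δ_m) /
 (1 + Σ_{i=0}^{k−1} ε̄^{i+1}·Π_{m=0}^{i} δ_m)`,
where the numerator has been written as the single sum `Σ_{i=0}^{k−1}`. -/
noncomputable def Rfun (ε : ℝ) (k : ℕ) (δ : ℕ → ℝ) : ℝ :=
  (∑ i ∈ Finset.range k, (1 - ε) ^ (i + 1) * H2 (δ i) * ∏ m ∈ Finset.range i, δ m) /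
  (1 + ∑ i ∈ Finset.range k, (1 - ε) ^ (i + 1) * ∏ m ∈ Finset.range (i + 1), δ m)

lemma H2_eq_binEntropy (x : ℝ) : H2 x = Real.binEntropy x / Real.log 2 := by
  rw [Real.binEntropy_eq_negMulLog_add_negMulLog_one_sub]
  simp only [H2, Real.negMulLog, Real.logb]
  ring

lemma H2_continuous : Continuous H2 := by
  simp only [funext H2_eq_binEntropy]
  exact Real.binEntropy_continuous.div_const _

@[simp] lemma H2_zero : H2 0 = 0 := by simp [H2_eq_binEntropy]

lemma H2_one_sub (x : ℝ) : H2 (1 - x) = H2 x := by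
  simp [H2_eq_binEntropy]

/-- Prepend a value to a sequence. -/
noncomputable def consF (a : ℝ) (f : ℕ → ℝ) : ℕ → ℝ := fun i => match i with
  | 0 => a
  | j + 1 => f j

@[simp] lemma consF_zero (a : ℝ) (f : ℕ → ℝ) : consF a f 0 = a := rfl
@[simp] lemma consF_succ (a : ℝ) (f : ℕ → ℝ) (j : ℕ) : consF a f (j + 1) = f j := rfl

/-- Auxiliary function for the exchange argument. -/
noncomputable def Wf (ε M : ℝ) (n : ℕ) (δ : ℕ → ℝ) : ℝ :=
  ∑ i ∈ Finset.range n,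
    (1 - ε) ^ (i + 1) * (H2 (δ i) - M * δ i) * ∏ m ∈ Finset.range i, δ m

lemma Wf_congr {ε M : ℝ} {n : ℕ} {δ δ' : ℕ → ℝ} (h : ∀ i < n, δ i = δ' i) :
    Wf ε M n δ = Wf ε M n δ' := by
  unfold Wf
  refine Finset.sum_congr rfl fun i hi => ?_
  rw [Finset.mem_range] at hi
  rw [h i hi]
  congr 1
  refine Finset.prod_congr rfl fun m hm => ?_
  exact h m (lt_trans (Finset.mem_range.mp hm) hi)

lemma Rfun_congr {ε : ℝ} {k : ℕ} {δ δ' : ℕ → ℝ} (h : ∀ i < k, δ i = δ' i) :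
    Rfun ε k δ = Rfun ε k δ' := by
  unfold Rfun
  congr 1
  · refine Finset.sum_congr rfl fun i hi => ?_
    rw [Finset.mem_range] at hi
    rw [h i hi]
    congr 1
    refine Finset.prod_congr rfl fun m hm => ?_
    exact h m (lt_trans (Finset.mem_range.mp hm) hi)
  · congr 1
    refine Finset.sum_congr rfl fun i hi => ?_
    rw [Finset.mem_range] at hi
    congr 1
    refine Finset.prod_congr rfl fun m hm => ?_
    exact h m (lt_of_lt_of_le (Finset.mem_range.mp hm) hi)

lemma Wf_succ (ε M : ℝ) (n : ℕ) (δ : ℕ → ℝ) :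
    Wf ε M (n + 1) δ = (1 - ε) * (H2 (δ 0) - M * δ 0)
      + (1 - ε) * δ 0 * Wf ε M n (fun i => δ (i + 1)) := by
  unfold Wf
  rw [Finset.sum_range_succ']
  simp only [Finset.prod_range_succ', Finset.range_zero, Finset.prod_empty, mul_one, pow_one,
    Finset.mul_sum]
  rw [add_comm]
  congr 1
  · ring
  · exact Finset.sum_congr rfl fun i hi => by ring

lemma Wf_eq (ε M : ℝ) (k : ℕ) (δ : ℕ → ℝ) :
    Wf ε M k δ =
      (∑ i ∈ Finset.range k, (1 - ε) ^ (i + 1) * H2 (δ i) * ∏ m ∈ Finset.range i, δ m)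
      - M * ∑ i ∈ Finset.range k, (1 - ε) ^ (i + 1) * ∏ m ∈ Finset.range (i + 1), δ m := by
  unfold Wf
  rw [Finset.mul_sum, ← Finset.sum_sub_distrib]
  refine Finset.sum_congr rfl fun i hi => ?_
  rw [Finset.prod_range_succ]
  ring

lemma denom_pos {ε : ℝ} (hε : ε ≤ 1) {k : ℕ} {δ : ℕ → ℝ}
    (hδ : ∀ i < k, 0 ≤ δ i) :
    0 < 1 + ∑ i ∈ Finset.range k, (1 - ε) ^ (i + 1) * ∏ m ∈ Finset.range (i + 1), δ m := by
  have h : 0 ≤ ∑ i ∈ Finset.range k, (1 - ε) ^ (i + 1) * ∏ m ∈ Finset.range (i + 1), δ m := by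
    refine Finset.sum_nonneg fun i hi => ?_
    refine mul_nonneg (pow_nonneg (by linarith) _) (Finset.prod_nonneg fun m hm => ?_)
    exact hδ m (lt_of_lt_of_le (Finset.mem_range.mp hm) (Finset.mem_range.mp hi))
  linarith

/-- For every `ε ∈ [0,1]` and integer `k ≥ 1`, the maximum of `R_ε` over the cube
`[0,1/2]^k` equals its maximum over the cube `[0,1]^k`. -/
theorem max_over_half_cube_eq_max_over_cube
    (ε : ℝ) (hε : ε ∈ Set.Icc (0 : ℝ) 1) (k : ℕ) (hk : 1 ≤ k) :
    ∃ M : ℝ,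
      IsGreatest {r : ℝ | ∃ δ : ℕ → ℝ,
        (∀ i < k, δ i ∈ Set.Icc (0 : ℝ) (1 / 2)) ∧ r = Rfun ε k δ} M ∧
      IsGreatest {r : ℝ | ∃ δ : ℕ → ℝ,
        (∀ i < k, δ i ∈ Set.Icc (0 : ℝ) 1) ∧ r = Rfun ε k δ} M := by
  obtain ⟨hε0, hε1⟩ := hε
  have hεb : (0:ℝ) ≤ 1 - ε := by linarith
  -- the full cube as a compact set
  set K : Set (ℕ → ℝ) := Set.pi Set.univ (fun _ : ℕ => Set.Icc (0:ℝ) 1) with hK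
  have hKc : IsCompact K := isCompact_univ_pi fun _ => isCompact_Icc
  have hKne : K.Nonempty := ⟨fun _ => 0, fun i _ => by constructor <;> norm_num⟩
  -- continuity
  have hnum : Continuous fun δ : ℕ → ℝ =>
      ∑ i ∈ Finset.range k, (1 - ε) ^ (i + 1) * H2 (δ i) * ∏ m ∈ Finset.range i, δ m := by
    refine continuous_finset_sum _ fun i _ => ?_
    exact (continuous_const.mul (H2_continuous.comp (continuous_apply i))).mul
      (continuous_finset_prod _ fun m _ => continuous_apply m)
  have hden : Continuous fun δ : ℕ → ℝ =>
      1 + ∑ i ∈ Finset.range k, (1 - ε) ^ (i + 1) * ∏ m ∈ Finset.range (i + 1), δ m := by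
    refine continuous_const.add (continuous_finset_sum _ fun i _ => ?_)
    exact continuous_const.mul (continuous_finset_prod _ fun m _ => continuous_apply m)
  have hcont : ContinuousOn (Rfun ε k) K := by
    refine ContinuousOn.div hnum.continuousOn hden.continuousOn fun δ hδ => ?_
    refine ne_of_gt (denom_pos hε1 fun i _ => ?_)
    exact (hδ i (Set.mem_univ i)).1
  -- the full feasible set is the image of K
  set fullSet : Set ℝ := {r : ℝ | ∃ δ : ℕ → ℝ,
      (∀ i < k, δ i ∈ Set.Icc (0 : ℝ) 1) ∧ r = Rfun ε k δ} with hfs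
  have hfull_eq : fullSet = Rfun ε k '' K := by
    ext r
    constructor
    · rintro ⟨δ, hδ, rfl⟩
      refine ⟨fun i => if i < k then δ i else 0, fun i _ => ?_, ?_⟩
      · by_cases h : i < k
        · simpa [h] using hδ i h
        · simp [h]
      · exact (Rfun_congr fun i hi => by simp [hi]).symm
    · rintro ⟨δ, hδ, rfl⟩
      exact ⟨δ, fun i _ => hδ i (Set.mem_univ i), rfl⟩
  have himg : IsCompact (Rfun ε k '' K) := hKc.image_of_continuousOn hcont
  obtain ⟨M, hMmem, hMub⟩ := himg.exists_isGreatest (hKne.image _)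
  rw [← hfull_eq] at hMmem hMub
  have hub : ∀ δ : ℕ → ℝ, (∀ i < k, δ i ∈ Set.Icc (0:ℝ) 1) → Rfun ε k δ ≤ M :=
    fun δ hδ => hMub ⟨δ, hδ, rfl⟩
  -- Fact (A): Wf is at most M
  have hA : ∀ n ≤ k, ∀ δ : ℕ → ℝ, (∀ i < n, δ i ∈ Set.Icc (0:ℝ) 1) →
      Wf ε M n δ ≤ M := by
    intro n hn δ hδ
    set δ' : ℕ → ℝ := fun i => if i < n then δ i else 0 with hδ'def
    have hδ'mem : ∀ i < k, δ' i ∈ Set.Icc (0:ℝ) 1 := by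
      intro i _
      by_cases h : i < n
      · simpa [hδ'def, h] using hδ i h
      · simp [hδ'def, h]
    have h1 : Wf ε M n δ = Wf ε M n δ' := Wf_congr fun i hi => by simp [hδ'def, hi]
    have h2 : Wf ε M n δ' = Wf ε M k δ' := by
      unfold Wf
      refine Finset.sum_subset (Finset.range_subset_range.mpr hn) fun i _ hi => ?_
      rw [Finset.mem_range, not_lt] at hi
      have : δ' i = 0 := by simp [hδ'def, Nat.not_lt.mpr hi]
      simp [this]
    have h3 : Rfun ε k δ' ≤ M := hub δ' hδ'mem
    have hd : 0 < 1 + ∑ i ∈ Finset.range k, (1 - ε) ^ (i + 1)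
        * ∏ m ∈ Finset.range (i + 1), δ' m :=
      denom_pos hε1 fun i hi => (hδ'mem i hi).1
    rw [Rfun, div_le_iff₀ hd] at h3
    rw [h1, h2, Wf_eq]
    nlinarith [h3]
  -- Fact (B): exchange argument
  have hB : ∀ n ≤ k, ∀ δ : ℕ → ℝ, (∀ i < n, δ i ∈ Set.Icc (0:ℝ) 1) →
      ∃ δ' : ℕ → ℝ, (∀ i < n, δ' i ∈ Set.Icc (0:ℝ) (1/2)) ∧
        Wf ε M n δ ≤ Wf ε M n δ' := by
    intro n
    induction n with
    | zero => intro _ δ _; exact ⟨fun _ => 0, fun i hi => absurd hi (Nat.not_lt_zero i), le_refl _⟩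
    | succ n ih =>
      intro hnk δ hδ
      have hnk' : n ≤ k := le_trans (Nat.le_succ n) hnk
      obtain ⟨τ', hτ'mem, hτ'⟩ := ih hnk' (fun i => δ (i + 1))
        (fun i hi => hδ (i + 1) (Nat.succ_lt_succ hi))
      have hτ'le : Wf ε M n τ' ≤ M := hA n hnk' τ' fun i hi =>
        ⟨(hτ'mem i hi).1, le_trans (hτ'mem i hi).2 (by norm_num)⟩
      obtain ⟨ht0, ht1⟩ := hδ 0 (Nat.succ_pos n)
      by_cases hth : δ 0 ≤ 1/2
      · refine ⟨consF (δ 0) τ', fun i hi => ?_, ?_⟩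
        · cases i with
          | zero => exact ⟨by simpa using ht0, by simpa using hth⟩
          | succ j => simpa using hτ'mem j (Nat.lt_of_succ_lt_succ hi)
        · rw [Wf_succ, Wf_succ]
          simp only [consF_zero, consF_succ]
          have h1 : (1 - ε) * δ 0 * Wf ε M n (fun i => δ (i + 1))
              ≤ (1 - ε) * δ 0 * Wf ε M n τ' :=
            mul_le_mul_of_nonneg_left hτ' (mul_nonneg hεb ht0)
          linarith
      · push_neg at hth
        refine ⟨consF (1 - δ 0) τ', fun i hi => ?_, ?_⟩
        · cases i with
          | zero =>
            refine ⟨by simp only [consF_zero]; linarith, by simp only [consF_zero]; linarith⟩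
          | succ j => simpa using hτ'mem j (Nat.lt_of_succ_lt_succ hi)
        · rw [Wf_succ, Wf_succ]
          simp only [consF_zero, consF_succ, H2_one_sub]
          have h1 : (1 - ε) * δ 0 * Wf ε M n (fun i => δ (i + 1))
              ≤ (1 - ε) * δ 0 * Wf ε M n τ' :=
            mul_le_mul_of_nonneg_left hτ' (mul_nonneg hεb ht0)
          have h2 : (0:ℝ) ≤ (1 - ε) * (2 * δ 0 - 1) * (M - Wf ε M n τ') :=
            mul_nonneg (mul_nonneg hεb (by linarith)) (by linarith)
          nlinarith [h1, h2]
  -- get maximizer and conclude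
  obtain ⟨δs, hδs, hMeq⟩ := hMmem
  have hWδs : Wf ε M k δs = M := by
    have hd : 0 < 1 + ∑ i ∈ Finset.range k, (1 - ε) ^ (i + 1)
        * ∏ m ∈ Finset.range (i + 1), δs m := denom_pos hε1 fun i hi => (hδs i hi).1
    rw [Rfun, eq_div_iff (ne_of_gt hd)] at hMeq
    rw [Wf_eq]
    nlinarith [hMeq]
  obtain ⟨δ', hδ'mem, hδ'W⟩ := hB k le_rfl δs hδs
  have hδ'full : ∀ i < k, δ' i ∈ Set.Icc (0:ℝ) 1 := fun i hi =>
    ⟨(hδ'mem i hi).1, le_trans (hδ'mem i hi).2 (by norm_num)⟩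
  have hRδ' : Rfun ε k δ' = M := by
    have hd : 0 < 1 + ∑ i ∈ Finset.range k, (1 - ε) ^ (i + 1)
        * ∏ m ∈ Finset.range (i + 1), δ' m := denom_pos hε1 fun i hi => (hδ'full i hi).1
    have hge : M ≤ Rfun ε k δ' := by
      rw [Rfun, le_div_iff₀ hd]
      have := hδ'W
      rw [hWδs, Wf_eq] at this
      nlinarith [this]
    exact le_antisymm (hub δ' hδ'full) hge
  refine ⟨M, ⟨⟨δ', hδ'mem, hRδ'.symm⟩, ?_⟩, ⟨⟨δs, hδs, hMeq⟩, hMub⟩⟩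
  rintro r ⟨δ, hδ, rfl⟩
  exact hub δ fun i hi => ⟨(hδ i hi).1, le_trans (hδ i hi).2 (by norm_num)⟩
end

section
/- Let ε ∈ [0,1) and let k ≥ 1 be an integer. If (δ₀,…,δ_{k−1}) ∈ (0,1)^k is a critical point of R_ε, i.e., all k partial derivatives ∂R_ε/∂δ_j vanish at (δ₀,…,δ_{k−1}), then (δ₀,…,δ_{k−1}) satisfies the recursion (∗): δ_j = δ_{j+1} / (δ_{j+1} + (1−δ_{j+1})·((1−δ_{j+1})/(1−δ_{j+2}))^{ε̄}) for every j = 0,…,k−2, with the convention δ̄_k := 1. -/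
/-- The recursion (∗), with the convention `δ̄_k := 1`. -/
def SatisfiesRec (ε : ℝ) (k : ℕ) (δ : ℕ → ℝ) : Prop :=
  ∀ j : ℕ, j + 2 ≤ k →
    δ j = δ (j + 1) /
      (δ (j + 1) + (1 - δ (j + 1)) *
        ((1 - δ (j + 1)) / (if j + 2 = k then 1 else 1 - δ (j + 2))) ^ (1 - ε))

lemma hasDerivAt_H2 {x : ℝ} (h0 : 0 < x) (h1 : x < 1) :
    HasDerivAt H2 (Real.logb 2 (1 - x) - Real.logb 2 x) x := by
  have h1' : (0:ℝ) < 1 - x := by linarith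
  have e1 : HasDerivAt (fun y : ℝ => y * Real.log y) (Real.log x + 1) x :=
    Real.hasDerivAt_mul_log h0.ne'
  have e2 : HasDerivAt (fun y : ℝ => (1 - y) * Real.log (1 - y))
      ((Real.log (1 - x) + 1) * (-1)) x := by
    have h3 : HasDerivAt (fun y : ℝ => 1 - y) (-1) x := (hasDerivAt_id x).const_sub 1
    have := (Real.hasDerivAt_mul_log h1'.ne').comp x h3
    exact this
  have key : HasDerivAt (fun y : ℝ => (-(y * Real.log y) - (1 - y) * Real.log (1 - y)) / Real.log 2)
      ((-(Real.log x + 1) - (Real.log (1 - x) + 1) * (-1)) / Real.log 2) x :=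
    (e1.neg.sub e2).div_const _
  have hfe : H2 = fun y : ℝ => (-(y * Real.log y) - (1 - y) * Real.log (1 - y)) / Real.log 2 := by
    funext y
    unfold H2 Real.logb
    ring
  rw [hfe]
  convert key using 1
  unfold Real.logb
  ring

/-- Let `ε ∈ [0,1)` and `k ≥ 1`.  If `(δ₀,…,δ_{k−1}) ∈ (0,1)^k` is a critical point of
`R_ε`, i.e. all `k` partial derivatives `∂R_ε/∂δ_j` vanish there, then it satisfies the
recursion (∗). -/
theorem critical_point_satisfies_recursion
    (ε : ℝ) (hε : ε ∈ Set.Ico (0 : ℝ) 1) (k : ℕ) (hk : 1 ≤ k)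
    (δ : ℕ → ℝ) (hδ : ∀ i < k, δ i ∈ Set.Ioo (0 : ℝ) 1)
    (hcrit : ∀ j < k,
      deriv (fun t : ℝ => Rfun ε k (Function.update δ j t)) (δ j) = 0) :
    SatisfiesRec ε k δ := by
  classical
  obtain ⟨hε0, hε1⟩ := hε
  have hebpos : (0:ℝ) < 1 - ε := by linarith
  set eb : ℝ := 1 - ε with hebdef
  have hδpos : ∀ m, m < k → 0 < δ m := fun m hm => (hδ m hm).1
  have hδlt : ∀ m, m < k → δ m < 1 := fun m hm => (hδ m hm).2
  have hPpos : ∀ n, n ≤ k → 0 < ∏ m ∈ Finset.range n, δ m := by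
    intro n hn
    apply Finset.prod_pos
    intro m hm
    exact hδpos m (lt_of_lt_of_le (Finset.mem_range.1 hm) hn)
  set N : ℝ := ∑ i ∈ Finset.range k, eb ^ (i+1) * H2 (δ i) * ∏ m ∈ Finset.range i, δ m with hNdef
  set Dd : ℝ := 1 + ∑ i ∈ Finset.range k, eb ^ (i+1) * ∏ m ∈ Finset.range (i+1), δ m with hDddef
  have hDdpos : 0 < Dd := by
    rw [hDddef]
    have : (0:ℝ) ≤ ∑ i ∈ Finset.range k, eb ^ (i+1) * ∏ m ∈ Finset.range (i+1), δ m := by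
      apply Finset.sum_nonneg
      intro i hi
      exact mul_nonneg (pow_nonneg hebpos.le _) (hPpos (i+1) (Finset.mem_range.1 hi)).le
    linarith
  set R : ℝ := N / Dd with hRdef
  set L : ℕ → ℝ := fun j => Real.logb 2 (1 - δ j) - Real.logb 2 (δ j) with hLdef
  -- Step A: cleared critical equations
  have hF : ∀ j, j < k →
      eb^(j+1) * (∏ m ∈ Finset.range (j+1), δ m) * L j
        + ∑ i ∈ Finset.Ico (j+1) k, eb^(i+1) * H2 (δ i) * ∏ m ∈ Finset.range i, δ m
      = R * ∑ i ∈ Finset.Ico j k, eb^(i+1) * ∏ m ∈ Finset.range (i+1), δ m := by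
    intro j hjk
    have hsplit : ∀ f : ℕ → ℝ,
        ∑ i ∈ Finset.range k, f i = (∑ i ∈ Finset.range j, f i) + ∑ i ∈ Finset.Ico j k, f i :=
      fun f => (Finset.sum_range_add_sum_Ico f hjk.le).symm
    have hbot : ∀ f : ℕ → ℝ,
        ∑ i ∈ Finset.Ico j k, f i = f j + ∑ i ∈ Finset.Ico (j+1) k, f i :=
      fun f => Finset.sum_eq_sum_Ico_succ_bot hjk f
    set a : ℝ := ∑ i ∈ Finset.range j, eb^(i+1) * H2 (δ i) * ∏ m ∈ Finset.range i, δ m with hadef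
    set b : ℝ := eb^(j+1) * ∏ m ∈ Finset.range j, δ m with hbdef
    set c : ℝ := ∑ i ∈ Finset.Ico (j+1) k,
        eb^(i+1) * H2 (δ i) * ∏ m ∈ (Finset.range i).erase j, δ m with hcdef
    set d : ℝ := 1 + ∑ i ∈ Finset.range j, eb^(i+1) * ∏ m ∈ Finset.range (i+1), δ m with hddef
    set e : ℝ := ∑ i ∈ Finset.Ico j k,
        eb^(i+1) * ∏ m ∈ (Finset.range (i+1)).erase j, δ m with hedef
    -- the one–variable form of Rfun
    have hfun : ∀ t : ℝ,
        Rfun ε k (Function.update δ j t) = (a + b * H2 t + c * t) / (d + e * t) := by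
      intro t
      have hpr_lt : ∀ i, i ≤ j →
          ∏ m ∈ Finset.range i, Function.update δ j t m = ∏ m ∈ Finset.range i, δ m := by
        intro i hij
        apply Finset.prod_congr rfl
        intro m hm
        have : m < i := Finset.mem_range.1 hm
        exact Function.update_of_ne (show m ≠ j by omega) t δ
      have hpr_gt : ∀ i, j < i →
          ∏ m ∈ Finset.range i, Function.update δ j t m
            = t * ∏ m ∈ (Finset.range i).erase j, δ m := by
        intro i hij
        rw [Finset.prod_update_of_mem (Finset.mem_range.2 hij)]
        rw [Finset.sdiff_singleton_eq_erase]
      have hnum : ∑ i ∈ Finset.range k,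
            eb^(i+1) * H2 (Function.update δ j t i) * ∏ m ∈ Finset.range i, Function.update δ j t m
          = a + b * H2 t + c * t := by
        rw [hsplit, hbot]
        have h1 : ∑ i ∈ Finset.range j,
            eb^(i+1) * H2 (Function.update δ j t i) * ∏ m ∈ Finset.range i, Function.update δ j t m
            = a := by
          rw [hadef]
          apply Finset.sum_congr rfl
          intro i hi
          have hij : i < j := Finset.mem_range.1 hi
          rw [Function.update_of_ne (show i ≠ j by omega) t δ, hpr_lt i hij.le]
        have h2 : eb^(j+1) * H2 (Function.update δ j t j)
              * ∏ m ∈ Finset.range j, Function.update δ j t m = b * H2 t := by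
          rw [Function.update_self, hpr_lt j le_rfl, hbdef]
          ring
        have h3 : ∑ i ∈ Finset.Ico (j+1) k,
            eb^(i+1) * H2 (Function.update δ j t i) * ∏ m ∈ Finset.range i, Function.update δ j t m
            = c * t := by
          rw [hcdef, Finset.sum_mul]
          apply Finset.sum_congr rfl
          intro i hi
          have hji : j < i := by
            have := (Finset.mem_Ico.1 hi).1; omega
          rw [Function.update_of_ne (show i ≠ j by omega) t δ, hpr_gt i hji]
          ring
        rw [h1, h2, h3]
        ring
      have hden : 1 + ∑ i ∈ Finset.range k,
            eb^(i+1) * ∏ m ∈ Finset.range (i+1), Function.update δ j t m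
          = d + e * t := by
        rw [hsplit]
        have h1 : ∑ i ∈ Finset.range j,
            eb^(i+1) * ∏ m ∈ Finset.range (i+1), Function.update δ j t m
            = ∑ i ∈ Finset.range j, eb^(i+1) * ∏ m ∈ Finset.range (i+1), δ m := by
          apply Finset.sum_congr rfl
          intro i hi
          have hij : i < j := Finset.mem_range.1 hi
          rw [hpr_lt (i+1) (by omega)]
        have h2 : ∑ i ∈ Finset.Ico j k,
            eb^(i+1) * ∏ m ∈ Finset.range (i+1), Function.update δ j t m = e * t := by
          rw [hedef, Finset.sum_mul]
          apply Finset.sum_congr rfl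
          intro i hi
          have hji : j ≤ i := (Finset.mem_Ico.1 hi).1
          rw [hpr_gt (i+1) (by omega)]
          ring
        rw [h1, h2, hddef]
        ring
      rw [Rfun]
      rw [← hebdef]
      rw [hnum, hden]
    -- positivity facts
    have hδj := hδ j hjk
    have hd1 : (1:ℝ) ≤ d := by
      rw [hddef]
      have : (0:ℝ) ≤ ∑ i ∈ Finset.range j, eb^(i+1) * ∏ m ∈ Finset.range (i+1), δ m := by
        apply Finset.sum_nonneg
        intro i hi
        have : i < j := Finset.mem_range.1 hi
        exact mul_nonneg (pow_nonneg hebpos.le _) (hPpos (i+1) (by omega)).le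
      linarith
    have he0 : (0:ℝ) ≤ e := by
      rw [hedef]
      apply Finset.sum_nonneg
      intro i hi
      have hik : i < k := (Finset.mem_Ico.1 hi).2
      apply mul_nonneg (pow_nonneg hebpos.le _)
      apply Finset.prod_nonneg
      intro m hm
      have : m < i + 1 := Finset.mem_range.1 (Finset.mem_of_mem_erase hm)
      exact (hδpos m (by omega)).le
    have hdenpos : 0 < d + e * δ j := by nlinarith [hδj.1]
    -- derivative computation
    have hH2d : HasDerivAt H2 (L j) (δ j) := by
      have := hasDerivAt_H2 hδj.1 hδj.2
      simpa [hLdef] using this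
    have htop : HasDerivAt (fun t : ℝ => a + b * H2 t + c * t) (b * L j + c) (δ j) := by
      have h1 : HasDerivAt (fun t : ℝ => a + b * H2 t) (b * L j) (δ j) := by
        simpa using (hH2d.const_mul b).const_add a
      have h2 : HasDerivAt (fun t : ℝ => c * t) c (δ j) := by
        simpa using (hasDerivAt_id (δ j)).const_mul c
      exact h1.add h2
    have hbot' : HasDerivAt (fun t : ℝ => d + e * t) e (δ j) := by
      simpa using ((hasDerivAt_id (δ j)).const_mul e).const_add d
    have hdiv := htop.div hbot' hdenpos.ne'
    have hderiv0 : ((b * L j + c) * (d + e * δ j) - (a + b * H2 (δ j) + c * δ j) * e)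
        / (d + e * δ j)^2 = 0 := by
      rw [← hdiv.deriv]
      rw [← hcrit j hjk]
      congr 1
      funext t
      exact (hfun t).symm
    have hkey : (b * L j + c) * (d + e * δ j) = (a + b * H2 (δ j) + c * δ j) * e := by
      have hsq : ((d + e * δ j)^2 : ℝ) ≠ 0 := pow_ne_zero _ hdenpos.ne'
      rw [div_eq_zero_iff] at hderiv0
      rcases hderiv0 with h | h
      · linarith
      · exact absurd h hsq
    -- translation back to sums over δ
    have hprod_erase : ∀ (s : Finset ℕ), j ∈ s →
        (∏ m ∈ s.erase j, δ m) * δ j = ∏ m ∈ s, δ m := by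
      intro s hs
      rw [mul_comm]
      exact Finset.mul_prod_erase s δ hs
    have ht3 : e * δ j = ∑ i ∈ Finset.Ico j k, eb^(i+1) * ∏ m ∈ Finset.range (i+1), δ m := by
      rw [hedef, Finset.sum_mul]
      apply Finset.sum_congr rfl
      intro i hi
      have hji : j ≤ i := (Finset.mem_Ico.1 hi).1
      rw [mul_assoc, hprod_erase _ (Finset.mem_range.2 (by omega))]
    have ht4 : c * δ j
        = ∑ i ∈ Finset.Ico (j+1) k, eb^(i+1) * H2 (δ i) * ∏ m ∈ Finset.range i, δ m := by
      rw [hcdef, Finset.sum_mul]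
      apply Finset.sum_congr rfl
      intro i hi
      have hji : j + 1 ≤ i := (Finset.mem_Ico.1 hi).1
      rw [mul_assoc, hprod_erase _ (Finset.mem_range.2 (by omega))]
    have ht1 : d + e * δ j = Dd := by
      rw [ht3, hddef, hDddef, hsplit (fun i => eb^(i+1) * ∏ m ∈ Finset.range (i+1), δ m)]
      ring
    have ht2 : a + b * H2 (δ j) + c * δ j = N := by
      rw [ht4, hadef, hbdef, hNdef,
        hsplit (fun i => eb^(i+1) * H2 (δ i) * ∏ m ∈ Finset.range i, δ m),
        hbot (fun i => eb^(i+1) * H2 (δ i) * ∏ m ∈ Finset.range i, δ m)]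
      ring
    rw [ht1, ht2] at hkey
    -- conclude
    rw [← ht3, ← ht4]
    have hRe : R * (e * δ j) = (b * L j + c) * δ j := by
      rw [hRdef, div_mul_eq_mul_div, div_eq_iff hDdpos.ne']
      linear_combination δ j * hkey.symm
    rw [hRe, hbdef, Finset.prod_range_succ]
    ring
  -- Step B: the per-coordinate relations
  have hid : ∀ x : ℝ, x * (Real.logb 2 (1-x) - Real.logb 2 x) - H2 x = Real.logb 2 (1-x) := by
    intro x
    unfold H2
    ring
  have hqpos : ∀ j, j < k → (0:ℝ) < eb^(j+1) * ∏ m ∈ Finset.range (j+1), δ m :=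
    fun j hj => mul_pos (pow_pos hebpos _) (hPpos (j+1) hj)
  have hLk : ∀ j, j + 1 = k → L j = R := by
    intro j hj1
    have hjk : j < k := by omega
    have h1 := hF j hjk
    rw [show j + 1 = k from hj1] at h1
    rw [Finset.Ico_self, Finset.sum_empty] at h1
    rw [Finset.sum_eq_sum_Ico_succ_bot hjk, show j + 1 = k from hj1,
      Finset.Ico_self, Finset.sum_empty] at h1
    have hq := hqpos j hjk
    rw [hj1] at hq
    have : eb^k * (∏ m ∈ Finset.range k, δ m) * L j
        = eb^k * (∏ m ∈ Finset.range k, δ m) * R := by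
      linear_combination h1
    exact mul_left_cancel₀ hq.ne' this
  have hL2 : ∀ j, j + 2 ≤ k → L j = R + eb * Real.logb 2 (1 - δ (j+1)) := by
    intro j hj2
    have hjk : j < k := by omega
    have hj1k : j + 1 < k := by omega
    have h1 := hF j hjk
    have h2 := hF (j+1) hj1k
    rw [Finset.sum_eq_sum_Ico_succ_bot hj1k
      (fun i => eb^(i+1) * H2 (δ i) * ∏ m ∈ Finset.range i, δ m)] at h1
    rw [Finset.sum_eq_sum_Ico_succ_bot hjk
      (fun i => eb^(i+1) * ∏ m ∈ Finset.range (i+1), δ m)] at h1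
    rw [show j + 1 + 1 = j + 2 from rfl] at h1 h2
    have hP2 : ∏ m ∈ Finset.range (j+2), δ m
        = (∏ m ∈ Finset.range (j+1), δ m) * δ (j+1) := Finset.prod_range_succ δ (j+1)
    rw [hP2] at h2
    have hq := hqpos j hjk
    have hmul : eb^(j+1) * (∏ m ∈ Finset.range (j+1), δ m) * L j
        = eb^(j+1) * (∏ m ∈ Finset.range (j+1), δ m)
          * (R + eb * (δ (j+1) * L (j+1) - H2 (δ (j+1)))) := by
      rw [hebdef] at *
      linear_combination h1 - h2
    have hcancel := mul_left_cancel₀ hq.ne' hmul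
    rw [hcancel]
    have := hid (δ (j+1))
    have hLj1 : L (j+1) = Real.logb 2 (1 - δ (j+1)) - Real.logb 2 (δ (j+1)) := by
      rw [hLdef]
    rw [hLj1]
    linear_combination eb * this
  -- Step C: conclude the recursion
  intro j hj2
  have hjk : j < k := by omega
  have hj1k : j + 1 < k := by omega
  have hx := hδ j hjk
  have hy := hδ (j+1) hj1k
  set x := δ j with hxdef
  set y := δ (j+1) with hydef
  set u : ℝ := if j + 2 = k then 1 else 1 - δ (j + 2) with hudef
  have hupos : 0 < u := by
    rw [hudef]
    split
    · norm_num
    · rename_i hne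
      have := hδ (j+2) (by omega)
      linarith [this.2]
  have hLj : L j = R + eb * Real.logb 2 (1 - y) := hL2 j hj2
  have hLj1 : L (j+1) = R + eb * Real.logb 2 u := by
    by_cases hcase : j + 2 = k
    · rw [hudef, if_pos hcase, Real.logb_one, mul_zero, add_zero]
      exact hLk (j+1) (by omega)
    · rw [hudef, if_neg hcase]
      exact hL2 (j+1) (by omega)
  have hx0 : (0:ℝ) < x := hx.1
  have hx1 : (0:ℝ) < 1 - x := by linarith [hx.2]
  have hy0 : (0:ℝ) < y := hy.1
  have hy1 : (0:ℝ) < 1 - y := by linarith [hy.2]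
  set W : ℝ := ((1 - y) / u) ^ eb with hWdef
  have hWpos : 0 < W := Real.rpow_pos_of_pos (div_pos hy1 hupos) _
  have hlogW : Real.log W = eb * (Real.log (1 - y) - Real.log u) := by
    rw [hWdef, Real.log_rpow (div_pos hy1 hupos), Real.log_div hy1.ne' hupos.ne']
  have hln : Real.logb 2 (1-x) - Real.logb 2 x
      = Real.logb 2 (1-y) - Real.logb 2 y + eb * (Real.logb 2 (1-y) - Real.logb 2 u) := by
    have e1 : L j - L (j+1) = eb * (Real.logb 2 (1-y) - Real.logb 2 u) := by
      rw [hLj, hLj1]; ring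
    have e2 : L j = Real.logb 2 (1-x) - Real.logb 2 x := by rw [hLdef]
    have e3 : L (j+1) = Real.logb 2 (1-y) - Real.logb 2 y := by rw [hLdef]
    rw [e2, e3] at e1
    linarith [e1]
  have hlog : Real.log ((1-x)/x) = Real.log ((1-y)/y * W) := by
    have hlog2 : Real.log 2 ≠ 0 := by
      have : (0:ℝ) < Real.log 2 := Real.log_pos (by norm_num)
      linarith
    have hln' : (Real.log (1-x) - Real.log x)
        = Real.log (1-y) - Real.log y + eb * (Real.log (1-y) - Real.log u) := by
      have := hln
      unfold Real.logb at this
      field_simp at this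
      linarith [this]
    rw [Real.log_div hx1.ne' hx0.ne', Real.log_mul (div_pos hy1 hy0).ne' hWpos.ne',
      Real.log_div hy1.ne' hy0.ne', hlogW]
    linarith [hln']
  have hratio : (1-x)/x = (1-y)/y * W := by
    have h1 : (0:ℝ) < (1-x)/x := div_pos hx1 hx0
    have h2 : (0:ℝ) < (1-y)/y * W := mul_pos (div_pos hy1 hy0) hWpos
    have := congrArg Real.exp hlog
    rwa [Real.exp_log h1, Real.exp_log h2] at this
  have hden2 : 0 < y + (1-y) * W := by
    have : 0 < (1-y) * W := mul_pos hy1 hWpos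
    linarith
  rw [eq_div_iff hden2.ne']
  have hr2 : (1-x) * y = x * ((1-y) * W) := by
    field_simp at hratio
    linear_combination hratio
  linear_combination -hr2
end

section
/- Let ε ∈ [0,1] with ε̄ = 1 − ε, let k ≥ 2 be an integer, and suppose (δ₀,…,δ_{k−1}) ∈ (0,1)^k satisfies the recursion (∗): δ_j = δ_{j+1} / (δ_{j+1} + (1−δ_{j+1})·((1−δ_{j+1})/(1−δ_{j+2}))^{ε̄}) for j = 0,…,k−2 with the convention δ̄_k := 1. Then the coordinates are monotone non-increasing: δ₀ ≥ δ₁ ≥ … ≥ δ_{k−1}. -/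
lemma rec_key (ε a R : ℝ) (hε : 0 ≤ 1 - ε) (ha : 0 < a) (ha1 : a < 1)
    (hR : 0 < R) (hR1 : R ≤ 1) :
    a ≤ a / (a + (1 - a) * R ^ (1 - ε)) := by
  have hRp : 0 < R ^ (1 - ε) := Real.rpow_pos_of_pos hR _
  have hR1' : R ^ (1 - ε) ≤ 1 := Real.rpow_le_one hR.le hR1 hε
  have hd : 0 < a + (1 - a) * R ^ (1 - ε) :=
    add_pos ha (mul_pos (by linarith) hRp)
  rw [le_div_iff₀ hd]
  have hle : a + (1 - a) * R ^ (1 - ε) ≤ 1 := by nlinarith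
  nlinarith

/-- Let `ε ∈ [0,1]`, let `k ≥ 2`, and suppose `(δ₀,…,δ_{k−1}) ∈ (0,1)^k` satisfies the
recursion (∗).  Then the coordinates are monotone non-increasing:
`δ₀ ≥ δ₁ ≥ … ≥ δ_{k−1}`. -/
theorem recursion_implies_monotone
    (ε : ℝ) (hε : ε ∈ Set.Icc (0 : ℝ) 1) (k : ℕ) (hk : 2 ≤ k)
    (δ : ℕ → ℝ) (hδ : ∀ i < k, δ i ∈ Set.Ioo (0 : ℝ) 1)
    (hrec : SatisfiesRec ε k δ) :
    ∀ j : ℕ, j + 1 < k → δ (j + 1) ≤ δ j := by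
  have hε' : 0 ≤ 1 - ε := by linarith [hε.2]
  have key : ∀ n : ℕ, ∀ j : ℕ, j + 2 + n = k → δ (j + 1) ≤ δ j := by
    intro n
    induction n with
    | zero =>
      intro j hjk
      simp only [Nat.add_zero] at hjk
      have h1 := hδ (j + 1) (by omega)
      have heq := hrec j (by omega)
      rw [if_pos hjk] at heq
      rw [heq, div_one]
      exact rec_key ε (δ (j + 1)) (1 - δ (j + 1)) hε' h1.1 h1.2
        (by linarith [h1.2]) (by linarith [h1.1])
    | succ n ih =>
      intro j hjk
      have ihj : δ (j + 2) ≤ δ (j + 1) := by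
        have := ih (j + 1) (by omega)
        simpa using this
      have h1 := hδ (j + 1) (by omega)
      have h2 := hδ (j + 2) (by omega)
      have heq := hrec j (by omega)
      rw [if_neg (by omega)] at heq
      rw [heq]
      exact rec_key ε (δ (j + 1)) ((1 - δ (j + 1)) / (1 - δ (j + 2))) hε'
        h1.1 h1.2
        (div_pos (by linarith [h1.2]) (by linarith [h2.2]))
        ((div_le_one (by linarith [h2.2])).mpr (by linarith))
  intro j hj
  exact key (k - (j + 2)) j (by omega)
end

section
/- Let ε ∈ [0,1) and let k ≥ 1 be an integer. If (δ₀,…,δ_{k−1}) ∈ (0,1)^k is a critical point of R_ε (all k partial derivatives of R_ε vanish there), then the value of R_ε at this point satisfies R_ε(δ₀,…,δ_{k−1}) = log₂((1 − δ_{k−1})/δ_{k−1}). -/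
lemma H2_hasDerivAt {x : ℝ} (hx0 : 0 < x) (hx1 : x < 1) :
    HasDerivAt H2 (Real.logb 2 ((1 - x) / x)) x := by
  have h1 : HasDerivAt (fun y : ℝ => y * Real.log y) (Real.log x + 1) x :=
    Real.hasDerivAt_mul_log hx0.ne'
  have hinner : HasDerivAt (fun y : ℝ => 1 - y) (-1 : ℝ) x := by
    simpa using (hasDerivAt_id' x).const_sub (1:ℝ)
  have h2 : HasDerivAt (fun y : ℝ => (1 - y) * Real.log (1 - y))
      (-(Real.log (1 - x) + 1)) x := by
    have := (Real.hasDerivAt_mul_log (x := 1 - x) (by linarith)).comp x hinner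
    exact this.congr_deriv (by ring)
  have h : HasDerivAt
      (fun y : ℝ => (-(y * Real.log y) - (1 - y) * Real.log (1 - y)) * (Real.log 2)⁻¹)
      ((-(Real.log x + 1) - (-(Real.log (1 - x) + 1))) * (Real.log 2)⁻¹) x :=
    (h1.neg.sub h2).mul_const _
  have heq : H2 = fun y : ℝ =>
      (-(y * Real.log y) - (1 - y) * Real.log (1 - y)) * (Real.log 2)⁻¹ := by
    funext y
    simp only [H2, Real.logb]
    ring
  rw [heq]
  convert h using 1
  rw [Real.logb, Real.log_div (by linarith) hx0.ne']
  ring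

/-- Let `ε ∈ [0,1)` and `k ≥ 1`.  If `(δ₀,…,δ_{k−1}) ∈ (0,1)^k` is a critical point of
`R_ε` (all `k` partial derivatives vanish there), then
`R_ε(δ₀,…,δ_{k−1}) = log₂((1 − δ_{k−1})/δ_{k−1})`. -/
theorem critical_point_value
    (ε : ℝ) (hε : ε ∈ Set.Ico (0 : ℝ) 1) (k : ℕ) (hk : 1 ≤ k)
    (δ : ℕ → ℝ) (hδ : ∀ i < k, δ i ∈ Set.Ioo (0 : ℝ) 1)
    (hcrit : ∀ j < k,
      deriv (fun t : ℝ => Rfun ε k (Function.update δ j t)) (δ j) = 0) :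
    Rfun ε k δ = Real.logb 2 ((1 - δ (k - 1)) / δ (k - 1)) := by
  obtain ⟨hε0, hε1⟩ := hε
  set j := k - 1 with hj
  have hkj : k = j + 1 := (Nat.succ_pred_eq_of_pos hk).symm
  have hjk : j < k := by omega
  set x := δ j with hx
  have hx0 : 0 < x := (hδ j hjk).1
  have hx1 : x < 1 := (hδ j hjk).2
  set P : ℝ := ∏ m ∈ Finset.range j, δ m with hP
  set c : ℝ := (1 - ε) ^ (j + 1) * P with hc
  set A : ℝ := ∑ i ∈ Finset.range j,
      (1 - ε) ^ (i + 1) * H2 (δ i) * ∏ m ∈ Finset.range i, δ m with hA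
  set B : ℝ := 1 + ∑ i ∈ Finset.range j,
      (1 - ε) ^ (i + 1) * ∏ m ∈ Finset.range (i + 1), δ m with hB
  have hPpos : 0 < P := Finset.prod_pos (fun m hm => (hδ m (by
    simp only [Finset.mem_range] at hm; omega)).1)
  have hcpos : 0 < c := mul_pos (pow_pos (by linarith) _) hPpos
  have hBpos : 0 < B := by
    have : 0 ≤ ∑ i ∈ Finset.range j,
        (1 - ε) ^ (i + 1) * ∏ m ∈ Finset.range (i + 1), δ m := by
      apply Finset.sum_nonneg
      intro i hi
      apply mul_nonneg (pow_nonneg (by linarith) _)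
      exact Finset.prod_nonneg (fun m hm => le_of_lt (hδ m (by
        simp only [Finset.mem_range] at hi hm ⊢; omega)).1)
    rw [hB]; linarith
  have hden : 0 < B + c * x := by positivity
  -- rewrite the function as a one-variable rational expression
  have hfun : (fun t : ℝ => Rfun ε k (Function.update δ j t))
      = fun t : ℝ => (A + c * H2 t) / (B + c * t) := by
    funext t
    unfold Rfun
    rw [hkj, Finset.sum_range_succ, Finset.sum_range_succ]
    have hsum1 : ∑ i ∈ Finset.range j,
        (1 - ε) ^ (i + 1) * H2 (Function.update δ j t i) *
          ∏ m ∈ Finset.range i, Function.update δ j t m = A := by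
      apply Finset.sum_congr rfl
      intro i hi
      simp only [Finset.mem_range] at hi
      rw [Function.update_of_ne (by omega)]
      congr 1
      apply Finset.prod_congr rfl
      intro m hm
      simp only [Finset.mem_range] at hm
      exact Function.update_of_ne (by omega) _ _
    have hsum2 : ∑ i ∈ Finset.range j,
        (1 - ε) ^ (i + 1) * ∏ m ∈ Finset.range (i + 1), Function.update δ j t m
        = B - 1 := by
      rw [hB]
      rw [add_sub_cancel_left]
      apply Finset.sum_congr rfl
      intro i hi
      simp only [Finset.mem_range] at hi
      congr 1
      apply Finset.prod_congr rfl
      intro m hm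
      simp only [Finset.mem_range] at hm
      exact Function.update_of_ne (by omega) _ _
    have hprodj : ∏ m ∈ Finset.range j, Function.update δ j t m = P := by
      apply Finset.prod_congr rfl
      intro m hm
      simp only [Finset.mem_range] at hm
      exact Function.update_of_ne (by omega) _ _
    have hprodj1 : ∏ m ∈ Finset.range (j + 1), Function.update δ j t m = P * t := by
      rw [Finset.prod_range_succ, hprodj, Function.update_self]
    rw [hsum1, hsum2, hprodj, hprodj1, Function.update_self]
    rw [hc]
    congr 1 <;> ring
  -- the value of Rfun at δ
  have hval : Rfun ε k δ = (A + c * H2 x) / (B + c * x) := by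
    have := congrFun hfun x
    rwa [hx, Function.update_eq_self] at this
  set L : ℝ := Real.logb 2 ((1 - x) / x) with hL
  -- derivative computation
  have hder : HasDerivAt (fun t : ℝ => (A + c * H2 t) / (B + c * t))
      ((c * L * (B + c * x) - (A + c * H2 x) * c) / (B + c * x) ^ 2) x := by
    have h1 : HasDerivAt (fun t : ℝ => A + c * H2 t) (c * L) x := by
      exact ((H2_hasDerivAt hx0 hx1).const_mul c).const_add A
    have h2 : HasDerivAt (fun t : ℝ => B + c * t) c x := by
      exact (((hasDerivAt_id' x).const_mul c).const_add B).congr_deriv (mul_one c)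
    exact h1.div h2 hden.ne'
  have hzero := hcrit j hjk
  rw [hfun] at hzero
  rw [hder.deriv] at hzero
  have hnum : c * L * (B + c * x) - (A + c * H2 x) * c = 0 := by
    have hsq : (B + c * x) ^ 2 ≠ 0 := by positivity
    field_simp at hzero
    linarith [hzero]
  have hkey : L * (B + c * x) = A + c * H2 x := by
    have := mul_right_cancel₀ hcpos.ne' (by linarith [hnum] :
      L * (B + c * x) * c = (A + c * H2 x) * c)
    linarith [this]
  rw [hval, hL]
  rw [← hkey]
  field_simp
  rfl
end

section
/- The maximum of the function δ ↦ H₂(δ)/(1+δ) over the interval [0, 1/2] equals log₂((1+√5)/2), the base-2 logarithm of the golden ratio, and it is attained at δ = (3 − √5)/2. -/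
lemma gibbs_term {x a : ℝ} (hx : 0 ≤ x) (ha : 0 < a) :
    x * (Real.log a - Real.log x) ≤ a - x := by
  rcases eq_or_lt_of_le hx with h | h
  · rw [← h]; simpa using ha.le
  · have h1 := Real.log_le_sub_one_of_pos (show 0 < a / x by positivity)
    rw [Real.log_div (ne_of_gt ha) (ne_of_gt h)] at h1
    calc x * (Real.log a - Real.log x) ≤ x * (a / x - 1) :=
          mul_le_mul_of_nonneg_left h1 h.le
      _ = a - x := by field_simp

/-- The maximum of `δ ↦ H₂(δ)/(1+δ)` over `[0,1/2]` equals `log₂((1+√5)/2)` (the base-2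
logarithm of the golden ratio), and it is attained at `δ = (3−√5)/2`. -/
theorem golden_ratio_capacity :
    IsGreatest ((fun δ : ℝ => H2 δ / (1 + δ)) '' Set.Icc 0 (1 / 2))
      (Real.logb 2 ((1 + Real.sqrt 5) / 2)) ∧
    (3 - Real.sqrt 5) / 2 ∈ Set.Icc (0 : ℝ) (1 / 2) ∧
    H2 ((3 - Real.sqrt 5) / 2) / (1 + (3 - Real.sqrt 5) / 2)
      = Real.logb 2 ((1 + Real.sqrt 5) / 2) := by
  set s := Real.sqrt 5 with hs
  have hs2 : s ^ 2 = 5 := Real.sq_sqrt (by norm_num)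
  have hs0 : 0 ≤ s := Real.sqrt_nonneg 5
  have hslb : 2 < s := by nlinarith
  have hsub : s < 3 := by nlinarith
  set φ : ℝ := (1 + s) / 2 with hφ
  have hφ1 : 1 < φ := by rw [hφ]; linarith
  have hφ0 : 0 < φ := by linarith
  have hd2 : (3 - s) / 2 = (φ ^ 2)⁻¹ := by
    refine eq_inv_of_mul_eq_one_left ?_
    rw [hφ]; ring_nf; nlinarith [hs2]
  have hd1 : 1 - (3 - s) / 2 = φ⁻¹ := by
    refine eq_inv_of_mul_eq_one_left ?_
    rw [hφ]; ring_nf; nlinarith [hs2]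
  have hlogd2 : Real.log ((3 - s) / 2) = -(2 * Real.log φ) := by
    rw [hd2, Real.log_inv, Real.log_pow]; push_cast; ring
  have hlogd1 : Real.log (1 - (3 - s) / 2) = -Real.log φ := by
    rw [hd1, Real.log_inv]
  have hlog2 : (0:ℝ) < Real.log 2 := Real.log_pos (by norm_num)
  -- key natural-log bound
  have key : ∀ δ ∈ Set.Icc (0:ℝ) (1/2),
      -(δ * Real.log δ) - (1 - δ) * Real.log (1 - δ) ≤ (1 + δ) * Real.log φ := by
    intro δ hδ
    obtain ⟨h0, h1⟩ := hδ
    have g1 := gibbs_term h0 (show 0 < (φ ^ 2)⁻¹ by positivity)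
    have g2 := gibbs_term (show (0:ℝ) ≤ 1 - δ by linarith) (show 0 < φ⁻¹ by positivity)
    rw [Real.log_inv, Real.log_pow] at g1
    rw [Real.log_inv] at g2
    push_cast at g1
    have hsum : (φ ^ 2)⁻¹ + φ⁻¹ = 1 := by rw [← hd2, ← hd1]; ring
    nlinarith [g1, g2]
  have bound : ∀ δ ∈ Set.Icc (0:ℝ) (1/2), H2 δ / (1 + δ) ≤ Real.logb 2 φ := by
    intro δ hδ
    have hpos : (0:ℝ) < 1 + δ := by linarith [hδ.1]
    rw [div_le_iff₀ hpos]
    have hH : H2 δ = (-(δ * Real.log δ) - (1 - δ) * Real.log (1 - δ)) / Real.log 2 := by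
      unfold H2; rw [Real.logb, Real.logb]; ring
    rw [hH, Real.logb, div_mul_eq_mul_div, div_le_div_iff₀ hlog2 hlog2]
    have := key δ hδ
    nlinarith [this, hlog2]
  have hmem : (3 - s) / 2 ∈ Set.Icc (0:ℝ) (1/2) := by
    constructor <;> [linarith; linarith]
  have hval : H2 ((3 - s) / 2) / (1 + (3 - s) / 2) = Real.logb 2 φ := by
    have hH : H2 ((3 - s) / 2) = (1 + (3 - s) / 2) * Real.logb 2 φ := by
      unfold H2
      rw [Real.logb, Real.logb, Real.logb, hlogd2, hlogd1]
      ring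
    have hne : (1 + (3 - s) / 2) ≠ 0 := by intro h; linarith [hsub]
    rw [hH]; exact mul_div_cancel_left₀ _ hne
  refine ⟨⟨⟨(3 - s) / 2, hmem, hval⟩, ?_⟩, hmem, hval⟩
  rintro y ⟨δ, hδ, rfl⟩
  exact bound δ hδ
end

section
/- The following strict inequality between two optimization values holds: sup over {(δ₀, δ₁, δ₂) ∈ [0,1]³ with δ₀ + δ₁ + δ₂ ≤ 1} of [ (1/2)·(H₂(δ₀) + (1/2)·H₂(δ₁) + (1/4)·H₂(δ₂)) ] / [ 7/4 + δ₀ + (1/2)·δ₁ + (1/4)·δ₂ ] < max over {δ ∈ [0, 1/2]} of H₂(δ)/(2 + 2δ). (The left-hand side is the Q-graph upper bound on the feedback capacity of the (2,∞)-RLL input-constrained BEC at erasure probability ε = 1/2, and the right-hand side is the non-causal capacity of the same channel; hence non-causal knowledge of erasures strictly increases capacity in this case.) -/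
/-- Rational lower bound on `logb 2` via integer powers. -/
lemma logb_lb (r q : ℝ) (a : ℤ) (n : ℕ) (hn : 0 < n) (hq : 0 < q)
    (hr : r * n = a) (h : (2:ℝ) ^ a ≤ q ^ n) : r ≤ Real.logb 2 q := by
  have hr' : r = (a : ℝ) / n := by
    field_simp at hr ⊢
    exact_mod_cast hr
  rw [hr', Real.le_logb_iff_rpow_le one_lt_two hq]
  have hpow : ((2:ℝ) ^ ((a : ℝ) / n)) ^ n ≤ q ^ n := by
    rw [← Real.rpow_natCast ((2:ℝ) ^ ((a : ℝ) / n)) n, ← Real.rpow_mul (by norm_num),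
      div_mul_cancel₀ _ (by exact_mod_cast hn.ne' : (n : ℝ) ≠ 0), Real.rpow_intCast]
    exact h
  exact le_of_pow_le_pow_left₀ hn.ne' hq.le hpow

/-- Gibbs' inequality / tangent-line bound for binary entropy. -/
lemma H2_le_tangent {x p : ℝ} (hx0 : 0 ≤ x) (hx1 : x ≤ 1) (hp0 : 0 < p) (hp1 : p < 1) :
    H2 x ≤ -(x * Real.logb 2 p) - (1 - x) * Real.logb 2 (1 - p) := by
  have hL2 : (0:ℝ) < Real.log 2 := Real.log_pos (by norm_num)
  have h1p : 0 < 1 - p := by linarith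
  rcases eq_or_lt_of_le hx0 with h0 | h0
  · have hnp : Real.logb 2 (1 - p) ≤ 0 :=
      Real.logb_nonpos one_lt_two h1p.le (by linarith)
    rw [← h0]
    have hH : H2 0 = 0 := by simp [H2]
    rw [hH]
    nlinarith [hnp]
  rcases eq_or_lt_of_le hx1 with h1 | h1
  · have hnp : Real.logb 2 p ≤ 0 := Real.logb_nonpos one_lt_two hp0.le hp1.le
    rw [h1]
    have hH : H2 1 = 0 := by simp [H2]
    rw [hH]
    nlinarith [hnp]
  -- interior case
  have hx1' : 0 < 1 - x := by linarith
  have key : -(x * Real.log x) - (1 - x) * Real.log (1 - x) ≤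
      -(x * Real.log p) - (1 - x) * Real.log (1 - p) := by
    have g1 : Real.log (p / x) ≤ p / x - 1 := Real.log_le_sub_one_of_pos (by positivity)
    have g2 : Real.log ((1 - p) / (1 - x)) ≤ (1 - p) / (1 - x) - 1 :=
      Real.log_le_sub_one_of_pos (by positivity)
    rw [Real.log_div hp0.ne' h0.ne'] at g1
    rw [Real.log_div h1p.ne' hx1'.ne'] at g2
    have e1 : x * (p / x - 1) = p - x := by field_simp
    have e2 : (1 - x) * ((1 - p) / (1 - x) - 1) = x - p := by field_simp; ring
    have m1 : x * (Real.log p - Real.log x) ≤ p - x := by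
      calc x * (Real.log p - Real.log x) ≤ x * (p / x - 1) :=
            mul_le_mul_of_nonneg_left g1 hx0
        _ = p - x := e1
    have m2 : (1 - x) * (Real.log (1 - p) - Real.log (1 - x)) ≤ x - p := by
      calc (1 - x) * (Real.log (1 - p) - Real.log (1 - x))
            ≤ (1 - x) * ((1 - p) / (1 - x) - 1) := mul_le_mul_of_nonneg_left g2 hx1'.le
        _ = x - p := e2
    nlinarith [m1, m2]
  simp only [H2, Real.logb]
  have e : ∀ a b : ℝ, -(x * (a / Real.log 2)) - (1 - x) * (b / Real.log 2)
      = (-(x * a) - (1 - x) * b) / Real.log 2 := by intro a b; ring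
  rw [e, e, div_le_div_iff_of_pos_right hL2]
  exact key


set_option maxHeartbeats 1000000 in
lemma lb_golden : (34:ℝ)/49 ≤ Real.logb 2 ((809:ℝ)/500) := by
  refine logb_lb ((34:ℝ)/49) ((809:ℝ)/500) 34 49 (by norm_num) (by norm_num) (by norm_num) ?_
  norm_num

set_option maxHeartbeats 1000000 in
lemma lb0 : (-147:ℝ)/100 ≤ Real.logb 2 ((361:ℝ)/1000) := by
  refine logb_lb _ _ (-147) 100 (by norm_num) (by norm_num) (by norm_num) ?_; norm_num

set_option maxHeartbeats 1000000 in
lemma mb0 : (-647:ℝ)/1000 ≤ Real.logb 2 ((639:ℝ)/1000) := by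
  refine logb_lb _ _ (-647) 1000 (by norm_num) (by norm_num) (by norm_num) ?_; norm_num
  rw [show (647:ℕ) = 250 + 250 + 147 by norm_num, show (1000:ℕ) = 250 * 4 by norm_num, pow_mul, pow_add, pow_add]
  norm_num

set_option maxHeartbeats 1000000 in
lemma lb1 : (-1557:ℝ)/1000 ≤ Real.logb 2 ((34:ℝ)/100) := by
  refine logb_lb _ _ (-1557) 1000 (by norm_num) (by norm_num) (by norm_num) ?_; norm_num
  rw [show (1557:ℕ) = 250 * 6 + 57 by norm_num, show (1000:ℕ) = 250 * 4 by norm_num, pow_add, pow_mul, pow_mul]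
  norm_num

set_option maxHeartbeats 1000000 in
lemma mb1 : (-3:ℝ)/5 ≤ Real.logb 2 ((66:ℝ)/100) := by
  refine logb_lb _ _ (-3) 5 (by norm_num) (by norm_num) (by norm_num) ?_; norm_num

set_option maxHeartbeats 1000000 in
lemma lb2 : (-1737:ℝ)/1000 ≤ Real.logb 2 ((3:ℝ)/10) := by
  refine logb_lb _ _ (-1737) 1000 (by norm_num) (by norm_num) (by norm_num) ?_; norm_num
  rw [show (1737:ℕ) = 250 * 6 + 237 by norm_num, show (1000:ℕ) = 250 * 4 by norm_num, pow_add, pow_mul, pow_mul]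
  norm_num

set_option maxHeartbeats 1000000 in
lemma mb2 : (-103:ℝ)/200 ≤ Real.logb 2 ((7:ℝ)/10) := by
  refine logb_lb _ _ (-103) 200 (by norm_num) (by norm_num) (by norm_num) ?_; norm_num

set_option maxHeartbeats 1000000

/-- The strict inequality between the Q-graph feedback upper bound for the `(2,∞)`-RLL
input-constrained BEC at `ε = 1/2` (the supremum on the left) and the non-causal
capacity of the same channel (the maximum on the right):
`sup_{δ₀,δ₁,δ₂∈[0,1], δ₀+δ₁+δ₂≤1} [(1/2)(H₂(δ₀) + (1/2)H₂(δ₁) + (1/4)H₂(δ₂))] /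
  [7/4 + δ₀ + (1/2)δ₁ + (1/4)δ₂]  <  max_{δ∈[0,1/2]} H₂(δ)/(2+2δ)`. -/
theorem feedback_upper_bound_lt_noncausal_capacity :
    ∃ M : ℝ,
      IsGreatest ((fun δ : ℝ => H2 δ / (2 + 2 * δ)) '' Set.Icc 0 (1 / 2)) M ∧
      sSup {r : ℝ | ∃ d0 d1 d2 : ℝ,
          d0 ∈ Set.Icc (0 : ℝ) 1 ∧ d1 ∈ Set.Icc (0 : ℝ) 1 ∧ d2 ∈ Set.Icc (0 : ℝ) 1 ∧
          d0 + d1 + d2 ≤ 1 ∧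
          r = (1 / 2) * (H2 d0 + (1 / 2) * H2 d1 + (1 / 4) * H2 d2) /
                (7 / 4 + d0 + (1 / 2) * d1 + (1 / 4) * d2)} < M := by
  set s : ℝ := Real.sqrt 5 with hs_def
  have hs2 : s ^ 2 = 5 := Real.sq_sqrt (by norm_num)
  have hs_lb : 2.236 ≤ s := by
    rw [hs_def]
    rw [show (2.236 : ℝ) = Real.sqrt (2.236 ^ 2) by
      rw [Real.sqrt_sq (by norm_num)]]
    exact Real.sqrt_le_sqrt (by norm_num)
  have hs_ub : s ≤ 2.25 := by
    nlinarith [hs2, Real.sqrt_nonneg (5:ℝ)]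
  set φ : ℝ := (1 + s) / 2 with hφ_def
  set δ0 : ℝ := (3 - s) / 2 with hδ0_def
  set c : ℝ := Real.logb 2 φ with hc_def
  have hφ_pos : 0 < φ := by rw [hφ_def]; nlinarith
  have hδ0_pos : 0 < δ0 := by rw [hδ0_def]; nlinarith
  have hδ0_lt : δ0 < 1 := by rw [hδ0_def]; nlinarith
  have hδ0_half : δ0 ≤ 1 / 2 := by rw [hδ0_def]; nlinarith
  -- log identities
  have h1δ : (1 : ℝ) - δ0 = φ⁻¹ := by
    refine eq_inv_of_mul_eq_one_left ?_
    rw [hδ0_def, hφ_def]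
    nlinarith
  have hδφ : δ0 = (φ ^ 2)⁻¹ := by
    refine eq_inv_of_mul_eq_one_left ?_
    rw [hδ0_def, hφ_def]
    nlinarith
  have hlog1 : Real.logb 2 (1 - δ0) = -c := by
    rw [h1δ, Real.logb_inv, hc_def]
  have hlog2 : Real.logb 2 δ0 = -(2 * c) := by
    rw [hδφ, Real.logb_inv, Real.logb_pow, hc_def]
    push_cast
    ring
  -- value at δ0
  have hval : H2 δ0 / (2 + 2 * δ0) = c / 2 := by
    have hH : H2 δ0 = (1 + δ0) * c := by
      rw [H2, hlog1, hlog2]; ring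
    rw [hH, show (2 : ℝ) + 2 * δ0 = (1 + δ0) * 2 by ring,
      mul_div_mul_left _ _ (by linarith : (1:ℝ) + δ0 ≠ 0)]
  refine ⟨c / 2, ⟨⟨δ0, ⟨hδ0_pos.le, hδ0_half⟩, hval⟩, ?_⟩, ?_⟩
  · -- upper bound of the image
    rintro y ⟨x, ⟨hx0, hx1⟩, rfl⟩
    have hden : (0:ℝ) < 2 + 2 * x := by linarith
    have hb := H2_le_tangent hx0 (by linarith : x ≤ 1) hδ0_pos hδ0_lt
    rw [hlog1, hlog2] at hb
    rw [div_le_iff₀ hden]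
    nlinarith [hb]
  · -- the sSup is at most 693/2000 < c/2
    have hB : (693 / 2000 : ℝ) < c / 2 := by
      have h1 : (34 : ℝ) / 49 ≤ Real.logb 2 (809 / 500) := by
        exact lb_golden
      have h2 : Real.logb 2 ((809 : ℝ) / 500) ≤ c := by
        rw [hc_def]
        apply Real.logb_le_logb_of_le one_lt_two (by norm_num)
        rw [hφ_def]; nlinarith
      nlinarith [h1, h2]
    refine lt_of_le_of_lt ?_ hB
    apply Real.sSup_le _ (by norm_num)
    rintro r ⟨d0, d1, d2, ⟨h00, h01⟩, ⟨h10, h11⟩, ⟨h20, h21⟩, hsum, rfl⟩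
    have hden : (0:ℝ) < 7 / 4 + d0 + (1 / 2) * d1 + (1 / 4) * d2 := by linarith
    -- tangent bounds at p = 0.361, 0.34, 0.3 with rational log lower bounds
    have hb0 := H2_le_tangent h00 h01 (by norm_num : (0:ℝ) < 361/1000) (by norm_num)
    have hb1 := H2_le_tangent h10 h11 (by norm_num : (0:ℝ) < 34/100) (by norm_num)
    have hb2 := H2_le_tangent h20 h21 (by norm_num : (0:ℝ) < 3/10) (by norm_num)
    have l0 : (-147 : ℝ) / 100 ≤ Real.logb 2 (361/1000) := by
      exact lb0
    have m0 : (-647 : ℝ) / 1000 ≤ Real.logb 2 (1 - 361/1000) := by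
      rw [show (1 : ℝ) - 361/1000 = 639/1000 by norm_num]
      exact mb0
    have l1 : (-1557 : ℝ) / 1000 ≤ Real.logb 2 (34/100) := by
      exact lb1
    have m1 : (-3 : ℝ) / 5 ≤ Real.logb 2 (1 - 34/100) := by
      rw [show (1 : ℝ) - 34/100 = 66/100 by norm_num]
      exact mb1
    have l2 : (-1737 : ℝ) / 1000 ≤ Real.logb 2 (3/10) := by
      exact lb2
    have m2 : (-103 : ℝ) / 200 ≤ Real.logb 2 (1 - 3/10) := by
      rw [show (1 : ℝ) - 3/10 = 7/10 by norm_num]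
      exact mb2
    have e0 : H2 d0 ≤ (147/100) * d0 + (647/1000) * (1 - d0) := by nlinarith [hb0]
    have e1 : H2 d1 ≤ (1557/1000) * d1 + (3/5) * (1 - d1) := by nlinarith [hb1]
    have e2 : H2 d2 ≤ (1737/1000) * d2 + (103/200) * (1 - d2) := by nlinarith [hb2]
    rw [div_le_iff₀ hden]
    nlinarith [e0, e1, e2]
end

section
/- Let c > 0 be a real number. A point δ ∈ (0,1) is a critical point of the function f(δ) = H₂(δ)/(c + δ) (i.e., f′(δ) = 0) if and only if (1−δ)^{c+1} = δ^{c}. Moreover, the equation (1−δ)^{c+1} = δ^{c} has a unique solution δ* in (0,1), this solution satisfies δ* < 1/2, and if in addition 2^{c+1} ≥ 3 then δ* ≥ 1/3. -/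
open Real Set

private noncomputable def gfun (c : ℝ) (x : ℝ) : ℝ :=
  (c + 1) * Real.log (1 - x) - c * Real.log x

private lemma rpow_iff_gzero (c : ℝ) {x : ℝ} (hx : x ∈ Set.Ioo (0:ℝ) 1) :
    (1 - x) ^ (c + 1) = x ^ c ↔ gfun c x = 0 := by
  rw [Real.rpow_def_of_pos (by linarith [hx.2]), Real.rpow_def_of_pos hx.1, Real.exp_eq_exp,
    gfun]
  constructor <;> intro h <;> nlinarith [h]

private lemma g_anti (c : ℝ) (hc : 0 < c) : StrictAntiOn (gfun c) (Set.Ioo (0:ℝ) 1) := by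
  intro x hx y hy hxy
  have h1 : Real.log (1 - y) < Real.log (1 - x) :=
    Real.log_lt_log (by linarith [hy.2]) (by linarith)
  have h2 : Real.log x < Real.log y := Real.log_lt_log hx.1 hxy
  have hc1 : (0:ℝ) < c + 1 := by linarith
  unfold gfun
  nlinarith

private lemma h2_deriv (c : ℝ) (hc : 0 < c) {x : ℝ} (hx : x ∈ Set.Ioo (0:ℝ) 1) :
    HasDerivAt (fun x : ℝ => H2 x / (c + x))
      ((gfun c x / Real.log 2) / (c + x) ^ 2) x := by
  have hx0 : x ≠ 0 := ne_of_gt hx.1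
  have hx1 : (1:ℝ) - x ≠ 0 := by have := hx.2; intro h; linarith [h]
  have hcx : c + x ≠ 0 := by have := hx.1; positivity
  have d1 : HasDerivAt (fun y : ℝ => y * Real.log y) (Real.log x + 1) x := by
    have := (hasDerivAt_id x).mul (Real.hasDerivAt_log hx0)
    exact this.congr_deriv (by simp [mul_inv_cancel₀ hx0])
  have dsub : HasDerivAt (fun y : ℝ => 1 - y) (-1 : ℝ) x := by
    exact ((hasDerivAt_const x (1:ℝ)).sub (hasDerivAt_id x)).congr_deriv (by simp)
  have d2 : HasDerivAt (fun y : ℝ => (1 - y) * Real.log (1 - y))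
      (-(Real.log (1 - x) + 1)) x := by
    have comp : HasDerivAt (fun y : ℝ => (1 - y) * Real.log (1 - y))
        ((Real.log (1 - x) + 1) * (-1)) x := by
      have base : HasDerivAt (fun z : ℝ => z * Real.log z) (Real.log (1 - x) + 1) (1 - x) := by
        have := (hasDerivAt_id (1 - x)).mul (Real.hasDerivAt_log hx1)
        exact this.congr_deriv (by simp [mul_inv_cancel₀ hx1])
      exact base.comp x dsub
    simpa using comp
  have dE : HasDerivAt (fun y : ℝ => -(y * Real.log y) - (1 - y) * Real.log (1 - y))
      (Real.log (1 - x) - Real.log x) x := by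
    have := (d1.neg).sub d2
    exact this.congr_deriv (by ring)
  have dH2 : HasDerivAt H2 ((Real.log (1 - x) - Real.log x) / Real.log 2) x := by
    have heq : H2 = fun y : ℝ =>
        (-(y * Real.log y) - (1 - y) * Real.log (1 - y)) / Real.log 2 := by
      funext y
      unfold H2 Real.logb
      ring
    rw [heq]
    exact dE.div_const _
  have dcx : HasDerivAt (fun y : ℝ => c + y) (1:ℝ) x := by
    exact ((hasDerivAt_const x c).add (hasDerivAt_id x)).congr_deriv (by simp)
  have := dH2.div dcx hcx
  refine this.congr_deriv ?_
  have hl2 : Real.log 2 ≠ 0 := ne_of_gt (Real.log_pos (by norm_num))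
  unfold gfun H2 Real.logb
  field_simp
  ring

/-- Let `c > 0`.  A point `δ ∈ (0,1)` is a critical point of `f(δ) = H₂(δ)/(c+δ)`
(i.e. `f′(δ) = 0`) iff `(1−δ)^{c+1} = δ^c` (real powers).  Moreover this equation has a
unique solution `δ*` in `(0,1)`, it satisfies `δ* < 1/2`, and if `2^{c+1} ≥ 3` then
`δ* ≥ 1/3`. -/
theorem critical_point_characterization (c : ℝ) (hc : 0 < c) :
    (∀ δ ∈ Set.Ioo (0 : ℝ) 1,
      (deriv (fun x : ℝ => H2 x / (c + x)) δ = 0 ↔ (1 - δ) ^ (c + 1) = δ ^ c)) ∧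
    ∃ δs : ℝ, δs ∈ Set.Ioo (0 : ℝ) 1 ∧ (1 - δs) ^ (c + 1) = δs ^ c ∧
      (∀ x ∈ Set.Ioo (0 : ℝ) 1, (1 - x) ^ (c + 1) = x ^ c → x = δs) ∧
      δs < 1 / 2 ∧ ((3 : ℝ) ≤ (2 : ℝ) ^ (c + 1) → 1 / 3 ≤ δs) := by
  have hl2 : (0:ℝ) < Real.log 2 := Real.log_pos (by norm_num)
  constructor
  · intro δ hδ
    rw [(h2_deriv c hc hδ).deriv, rpow_iff_gzero c hδ]
    have hcδ : (0:ℝ) < c + δ := by linarith [hδ.1]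
    rw [div_eq_zero_iff, div_eq_zero_iff]
    constructor
    · rintro (⟨h | h⟩ | h)
      · exact h
      · exact absurd h (ne_of_gt hl2)
      · exact absurd h (by positivity)
    · intro h; exact Or.inl (Or.inl h)
  · -- existence
    set a : ℝ := Real.exp (-(c + 1) * Real.log 2 / c) with ha_def
    have ha_pos : 0 < a := Real.exp_pos _
    have ha_half : a < 1 / 2 := by
      have h1 : -(c + 1) * Real.log 2 / c < -Real.log 2 := by
        rw [div_lt_iff₀ hc]
        nlinarith
      calc a < Real.exp (-Real.log 2) := Real.exp_lt_exp.mpr h1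
        _ = 1 / 2 := by rw [Real.exp_neg, Real.exp_log (by norm_num)]; norm_num
    have hga : 0 ≤ gfun c a := by
      have hloga : Real.log a = -(c + 1) * Real.log 2 / c := Real.log_exp _
      have h1a : Real.log (1 - a) ≥ Real.log (1/2) := by
        apply Real.log_le_log (by norm_num)
        linarith
      have hhalf : Real.log (1/2 : ℝ) = -Real.log 2 := by
        rw [one_div, Real.log_inv]
      rw [hhalf] at h1a
      unfold gfun
      rw [hloga]
      have : c * (-(c + 1) * Real.log 2 / c) = -(c+1) * Real.log 2 := by
        field_simp
      rw [this]
      nlinarith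
    have hgb : gfun c (1/2 : ℝ) < 0 := by
      unfold gfun
      norm_num
      rw [one_div, Real.log_inv]
      nlinarith
    have hcont : ContinuousOn (gfun c) (Set.Icc a (1/2)) := by
      intro x hx
      have hx0 : x ≠ 0 := ne_of_gt (lt_of_lt_of_le ha_pos hx.1)
      have hx1 : (1:ℝ) - x ≠ 0 := by
        have := hx.2; intro h; rw [sub_eq_zero] at h; linarith
      apply ContinuousAt.continuousWithinAt
      have l1 : ContinuousAt (fun y : ℝ => Real.log (1 - y)) x :=
        (Real.continuousAt_log hx1).comp (by fun_prop)
      have l2 : ContinuousAt Real.log x := Real.continuousAt_log hx0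
      exact (continuousAt_const.mul l1).sub (continuousAt_const.mul l2)
    obtain ⟨δs, hmem, hzero⟩ :=
      intermediate_value_Icc' (le_of_lt ha_half) hcont ⟨le_of_lt hgb, hga⟩
    have hδs : δs ∈ Set.Ioo (0:ℝ) 1 := by
      constructor
      · exact lt_of_lt_of_le ha_pos hmem.1
      · linarith [hmem.2]
    have hδs_half : δs < 1 / 2 := by
      rcases lt_or_eq_of_le hmem.2 with h | h
      · exact h
      · exfalso; rw [h] at hzero; linarith
    refine ⟨δs, hδs, (rpow_iff_gzero c hδs).mpr hzero, ?_, hδs_half, ?_⟩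
    · intro x hx hxe
      have hxz : gfun c x = 0 := (rpow_iff_gzero c hx).mp hxe
      exact (g_anti c hc).injOn hx hδs (by rw [hxz, hzero])
    · intro h3
      have hlog3 : Real.log 3 ≤ (c + 1) * Real.log 2 := by
        have := Real.log_le_log (by norm_num) h3
        rw [Real.log_rpow (by norm_num)] at this
        linarith [mul_comm (Real.log 2) (c + 1), this]
      have hg13 : 0 ≤ gfun c (1/3 : ℝ) := by
        unfold gfun
        have e1 : (1:ℝ) - 1/3 = 2/3 := by norm_num
        rw [e1, Real.log_div (by norm_num) (by norm_num),
          show ((1:ℝ)/3) = 3⁻¹ by norm_num, Real.log_inv]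
        nlinarith
      by_contra hlt
      push_neg at hlt
      have h13 : (1/3 : ℝ) ∈ Set.Ioo (0:ℝ) 1 := by norm_num
      have := g_anti c hc hδs h13 hlt
      rw [hzero] at this
      linarith
end
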